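/- arXiv:1705.10195 — 2 statements merged into one kernel-verified Lean document; each statement's English description precedes it below -/
import Mathlib

section
/- Let A be a family of subsets of [n], each of size at most p. Then there exists a subfamily Â ⊆ A that is q-representative for A and has size at most binomial(p+q, p). -/
open Finset Equiv

variable {n : ℕ}

/-- Split `↥T` into `↥S ⊕ ↥(T \ S)` when `S ⊆ T`. -/
def splitEquiv (S T : Finset (Fin n)) (hST : S ⊆ T) :
    {x : Fin n // x ∈ T} ≃ ({x : Fin n // x ∈ S} ⊕ {x : Fin n // x ∈ T \ S}) where
  toFun x := if h : (x : Fin n) ∈ S then .inl ⟨x, h⟩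
    else .inr ⟨x, Finset.mem_sdiff.2 ⟨x.2, h⟩⟩
  invFun y := Sum.elim (fun (z : {x : Fin n // x ∈ S}) => (⟨z.1, hST z.2⟩ : {x : Fin n // x ∈ T}))
    (fun (z : {x : Fin n // x ∈ T \ S}) => ⟨z.1, (Finset.mem_sdiff.1 z.2).1⟩) y
  left_inv x := by by_cases h : (x : Fin n) ∈ S <;> simp [h]
  right_inv y := by
    rcases y with z | z
    · simp [z.2]
    · simp [(Finset.mem_sdiff.1 z.2).2]

/-- A permutation of `Fin n` that maps `S` onto the `S.card` smallest elements of `T`,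
maps `T \ S` onto the rest of `T`, and fixes everything outside `T`. -/
noncomputable def sortPerm (S T : Finset (Fin n)) (hST : S ⊆ T) : Equiv.Perm (Fin n) :=
  Equiv.Perm.subtypeCongr
    ((splitEquiv S T hST).trans
      (((Equiv.sumCongr S.equivFin (T \ S).equivFin).trans
        (finSumFinEquiv.trans
          ((finCongr (by
              have := Finset.card_sdiff_of_subset hST
              have := Finset.card_le_card hST
              omega)).trans
            (T.orderIsoOfFin rfl).toEquiv))) ))
    (Equiv.refl _)

lemma card_split {S T : Finset (Fin n)} (hST : S ⊆ T) : S.card + (T \ S).card = T.card := by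
  have h1 := Finset.card_sdiff_of_subset hST
  have h2 := Finset.card_le_card hST
  omega

lemma sortPerm_apply_of_notMem {S T : Finset (Fin n)} (hST : S ⊆ T) {x : Fin n}
    (hx : x ∉ T) : sortPerm S T hST x = x := by
  simp [sortPerm, Equiv.Perm.subtypeCongr.right_apply _ _ hx]

lemma sortPerm_apply_of_mem_left {S T : Finset (Fin n)} (hST : S ⊆ T) {x : Fin n}
    (hx : x ∈ S) : ∃ i : Fin T.card, (i : ℕ) < S.card ∧
      sortPerm S T hST x = T.orderIsoOfFin rfl i := by
  have hxT : x ∈ T := hST hx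
  rw [sortPerm, Equiv.Perm.subtypeCongr.left_apply _ _ hxT]
  refine ⟨finCongr (card_split hST) (finSumFinEquiv (Sum.inl (S.equivFin ⟨x, hx⟩))), ?_, ?_⟩
  · simpa [finSumFinEquiv] using (S.equivFin ⟨x, hx⟩).2
  · simp [splitEquiv, hx]

lemma sortPerm_apply_of_mem_right {S T : Finset (Fin n)} (hST : S ⊆ T) {x : Fin n}
    (hx : x ∈ T \ S) : ∃ i : Fin T.card, S.card ≤ (i : ℕ) ∧
      sortPerm S T hST x = T.orderIsoOfFin rfl i := by
  have hxT : x ∈ T := (Finset.mem_sdiff.1 hx).1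
  have hxS : x ∉ S := (Finset.mem_sdiff.1 hx).2
  rw [sortPerm, Equiv.Perm.subtypeCongr.left_apply _ _ hxT]
  refine ⟨finCongr (card_split hST) (finSumFinEquiv (Sum.inr ((T \ S).equivFin ⟨x, hx⟩))), ?_, ?_⟩
  · simp [finSumFinEquiv]
  · simp [splitEquiv, hxS, hxT]

lemma sortPerm_mem {S T : Finset (Fin n)} (hST : S ⊆ T) {x : Fin n}
    (hx : x ∈ T) : sortPerm S T hST x ∈ T := by
  by_cases h : x ∈ S
  · obtain ⟨i, -, hi⟩ := sortPerm_apply_of_mem_left hST h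
    rw [hi]; exact (T.orderIsoOfFin rfl i).2
  · obtain ⟨i, -, hi⟩ := sortPerm_apply_of_mem_right hST (Finset.mem_sdiff.2 ⟨hx, h⟩)
    rw [hi]; exact (T.orderIsoOfFin rfl i).2

lemma sortPerm_lt {S T : Finset (Fin n)} (hST : S ⊆ T) {x y : Fin n}
    (hx : x ∈ S) (hy : y ∈ T \ S) : sortPerm S T hST x < sortPerm S T hST y := by
  obtain ⟨i, hi1, hi2⟩ := sortPerm_apply_of_mem_left hST hx
  obtain ⟨j, hj1, hj2⟩ := sortPerm_apply_of_mem_right hST hy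
  rw [hi2, hj2]
  have hij : i < j := by rw [Fin.lt_def]; omega
  exact_mod_cast (T.orderIsoOfFin rfl).lt_iff_lt.2 hij

lemma sortPerm_image {S T : Finset (Fin n)} (hST : S ⊆ T) :
    T.image (sortPerm S T hST) = T := by
  apply Finset.eq_of_subset_of_card_le
  · intro y hy
    obtain ⟨x, hx, rfl⟩ := Finset.mem_image.1 hy
    exact sortPerm_mem hST hx
  · rw [Finset.card_image_of_injective _ (sortPerm S T hST).injective]

lemma choose_mono2 {a b p q : ℕ} (ha : a ≤ p) (hb : b ≤ q) :
    (a + b).choose a ≤ (p + q).choose p := by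
  have h1 : (a + b).choose a = (a + b).choose b := by
    rw [← Nat.choose_symm (Nat.le_add_right a b)]; congr 1; omega
  have h2 : (p + b).choose b = (p + b).choose p := by
    rw [← Nat.choose_symm (Nat.le_add_left b p)]; congr 1; omega
  calc (a + b).choose a = (a + b).choose b := h1
    _ ≤ (p + b).choose b := Nat.choose_le_choose b (by omega)
    _ = (p + b).choose p := h2
    _ ≤ (p + q).choose p := Nat.choose_le_choose p (by omega)

lemma trans_sortPerm_inj {S T S' T' : Finset (Fin n)} (h : S ⊆ T) (h' : S' ⊆ T')
    (σ σ' : Equiv.Perm (Fin n)) (hS : S = S') (hT : T = T')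
    (heq : σ.trans (sortPerm S T h) = σ'.trans (sortPerm S' T' h')) : σ = σ' := by
  subst hS; subst hT
  have := congrArg (fun e => Equiv.trans e (sortPerm S T h).symm) heq
  simpa [Equiv.trans_assoc] using this

lemma perm_count {p q : ℕ} (A B : Finset (Fin n)) (hAB : Disjoint A B)
    (ha : A.card ≤ p) (hb : B.card ≤ q) :
    Nat.factorial n ≤
      (Finset.univ.filter
        (fun σ : Equiv.Perm (Fin n) => ∀ x ∈ A, ∀ y ∈ B, σ x < σ y)).card
        * (p + q).choose p := by
  classical
  set G := Finset.univ.filter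
    (fun σ : Equiv.Perm (Fin n) => ∀ x ∈ A, ∀ y ∈ B, σ x < σ y) with hG
  have hsub : ∀ σ : Equiv.Perm (Fin n), A.image σ ⊆ (A ∪ B).image σ :=
    fun σ => Finset.image_subset_image Finset.subset_union_left
  set F : Equiv.Perm (Fin n) → Equiv.Perm (Fin n) := fun σ =>
    σ.trans (sortPerm (A.image σ) ((A ∪ B).image σ) (hsub σ)) with hF
  -- image of A ∪ B is preserved by F
  have himg : ∀ σ : Equiv.Perm (Fin n), (A ∪ B).image (F σ) = (A ∪ B).image σ := by
    intro σ
    have : (A ∪ B).image (F σ) =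
        ((A ∪ B).image σ).image (sortPerm (A.image σ) ((A ∪ B).image σ) (hsub σ)) := by
      rw [Finset.image_image]; rfl
    rw [this, sortPerm_image]
  -- F lands in G
  have hFG : ∀ σ : Equiv.Perm (Fin n), F σ ∈ G := by
    intro σ
    rw [hG, Finset.mem_filter]
    refine ⟨Finset.mem_univ _, fun x hx y hy => ?_⟩
    have hxS : σ x ∈ A.image σ := Finset.mem_image_of_mem σ hx
    have hyT : σ y ∈ ((A ∪ B).image σ) \ (A.image σ) := by
      rw [Finset.mem_sdiff]
      constructor
      · exact Finset.mem_image_of_mem σ (Finset.mem_union_right _ hy)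
      · intro hc
        obtain ⟨x', hx', hxx⟩ := Finset.mem_image.1 hc
        have : x' = y := σ.injective hxx
        subst this
        exact (Finset.disjoint_left.1 hAB hx') hy
    exact sortPerm_lt (hsub σ) hxS hyT
  -- fibers of F are small
  have hfiber : ∀ τ ∈ Finset.univ.image F,
      (Finset.univ.filter (fun σ => F σ = τ)).card ≤ (p + q).choose p := by
    intro τ hτ
    have hcard : ∀ σ ∈ Finset.univ.filter (fun σ => F σ = τ),
        A.image σ ∈ ((A ∪ B).image τ).powersetCard A.card := by
      intro σ hσ
      have hστ : F σ = τ := (Finset.mem_filter.1 hσ).2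
      rw [Finset.mem_powersetCard]
      constructor
      · calc A.image σ ⊆ (A ∪ B).image σ := hsub σ
          _ = (A ∪ B).image (F σ) := (himg σ).symm
          _ = (A ∪ B).image τ := by rw [hστ]
      · exact Finset.card_image_of_injective _ σ.injective
    have hinj : Set.InjOn (fun σ : Equiv.Perm (Fin n) => A.image σ)
        (↑(Finset.univ.filter (fun σ => F σ = τ)) : Set (Equiv.Perm (Fin n))) := by
      intro σ hσ σ' hσ' hgeq
      simp only [Finset.coe_filter, Set.mem_setOf_eq] at hσ hσ'
      have hT : (A ∪ B).image σ = (A ∪ B).image σ' := by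
        rw [← himg σ, ← himg σ', hσ.2, hσ'.2]
      exact trans_sortPerm_inj (hsub σ) (hsub σ') σ σ' hgeq hT
        (show F σ = F σ' by rw [hσ.2, hσ'.2])
    calc (Finset.univ.filter (fun σ => F σ = τ)).card
        ≤ (((A ∪ B).image τ).powersetCard A.card).card :=
          Finset.card_le_card_of_injOn _ hcard hinj
      _ = ((A ∪ B).image τ).card.choose A.card := by rw [Finset.card_powersetCard]
      _ = (A.card + B.card).choose A.card := by
          rw [Finset.card_image_of_injective _ τ.injective,
            Finset.card_union_of_disjoint hAB]
      _ ≤ (p + q).choose p := choose_mono2 ha hb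
  have hmain : (Finset.univ : Finset (Equiv.Perm (Fin n))).card ≤
      (p + q).choose p * (Finset.univ.image F).card :=
    Finset.card_le_mul_card_image _ _ hfiber
  have himgG : Finset.univ.image F ⊆ G := by
    intro τ hτ
    obtain ⟨σ, -, rfl⟩ := Finset.mem_image.1 hτ
    exact hFG σ
  have hcardG : (Finset.univ.image F).card ≤ G.card := Finset.card_le_card himgG
  have hperm : (Finset.univ : Finset (Equiv.Perm (Fin n))).card = Nat.factorial n := by
    rw [Finset.card_univ, Fintype.card_perm, Fintype.card_fin]
  calc Nat.factorial n = (Finset.univ : Finset (Equiv.Perm (Fin n))).card := hperm.symm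
    _ ≤ (p + q).choose p * (Finset.univ.image F).card := hmain
    _ ≤ (p + q).choose p * G.card := Nat.mul_le_mul_left _ hcardG
    _ = G.card * (p + q).choose p := Nat.mul_comm _ _

lemma bollobas {p q : ℕ} (I : Finset (Finset (Fin n))) (Bf : Finset (Fin n) → Finset (Fin n))
    (hp : ∀ S ∈ I, S.card ≤ p) (hq : ∀ S ∈ I, (Bf S).card ≤ q)
    (hd : ∀ S ∈ I, Disjoint S (Bf S))
    (hcross : ∀ S ∈ I, ∀ S' ∈ I, S ≠ S' → ¬ Disjoint S' (Bf S)) :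
    I.card ≤ (p + q).choose p := by
  classical
  set G : Finset (Fin n) → Finset (Equiv.Perm (Fin n)) := fun S =>
    Finset.univ.filter (fun σ => ∀ x ∈ S, ∀ y ∈ Bf S, σ x < σ y) with hGdef
  have hmemG : ∀ S σ, σ ∈ G S ↔ ∀ x ∈ S, ∀ y ∈ Bf S, σ x < σ y := by
    intro S σ; rw [hGdef]; simp
  have hdisj : ∀ S ∈ I, ∀ S' ∈ I, S ≠ S' → Disjoint (G S) (G S') := by
    intro S hS S' hS' hne
    rw [Finset.disjoint_left]
    intro σ h1 h2
    obtain ⟨x, hx1, hx2⟩ := Finset.not_disjoint_iff.1 (hcross S hS S' hS' hne)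
    obtain ⟨y, hy1, hy2⟩ := Finset.not_disjoint_iff.1 (hcross S' hS' S hS hne.symm)
    have l1 : σ y < σ x := (hmemG S σ).1 h1 y hy1 x hx2
    have l2 : σ x < σ y := (hmemG S' σ).1 h2 x hx1 y hy2
    omega
  have hsum : ∑ S ∈ I, (G S).card ≤ Nat.factorial n := by
    rw [← Finset.card_biUnion hdisj]
    calc (I.biUnion G).card ≤ (Finset.univ : Finset (Equiv.Perm (Fin n))).card :=
          Finset.card_le_card (Finset.subset_univ _)
      _ = Nat.factorial n := by rw [Finset.card_univ, Fintype.card_perm, Fintype.card_fin]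
  have hlow : ∀ S ∈ I, Nat.factorial n ≤ (G S).card * (p + q).choose p := by
    intro S hS
    exact perm_count S (Bf S) (hd S hS) (hp S hS) (hq S hS)
  have hfinal : I.card * Nat.factorial n ≤ (p + q).choose p * Nat.factorial n := by
    calc I.card * Nat.factorial n = ∑ _S ∈ I, Nat.factorial n := by
          rw [Finset.sum_const, smul_eq_mul]
      _ ≤ ∑ S ∈ I, (G S).card * (p + q).choose p := Finset.sum_le_sum hlow
      _ = (∑ S ∈ I, (G S).card) * (p + q).choose p := by rw [Finset.sum_mul]
      _ ≤ Nat.factorial n * (p + q).choose p :=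
          Nat.mul_le_mul_right _ hsum
      _ = (p + q).choose p * Nat.factorial n := Nat.mul_comm _ _
  exact Nat.le_of_mul_le_mul_right hfinal (Nat.factorial_pos n)

/-- `Ahat` is a `q`-representative subfamily of `A` (families of subsets of `[n]` = `Fin n`):
for every `B ⊆ [n]` with `|B| ≤ q`, `A` contains a member disjoint from `B` iff `Ahat` does. -/
def IsRepFamily (n q : ℕ) (Ahat A : Finset (Finset (Fin n))) : Prop :=
  Ahat ⊆ A ∧ ∀ B : Finset (Fin n), B.card ≤ q →
    ((∃ S ∈ A, Disjoint S B) ↔ (∃ S ∈ Ahat, Disjoint S B))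

theorem rep_family_exists (n p q : ℕ) (A : Finset (Finset (Fin n)))
    (hA : ∀ S ∈ A, S.card ≤ p) :
    ∃ Ahat : Finset (Finset (Fin n)),
      IsRepFamily n q Ahat A ∧ Ahat.card ≤ (p + q).choose p := by
  classical
  set P : Finset (Finset (Fin n)) → Prop := fun C =>
    ∀ B : Finset (Fin n), B.card ≤ q → (∃ S ∈ A, Disjoint S B) → (∃ S ∈ C, Disjoint S B)
    with hP
  have hPA : P A := fun B _ h => h
  have h𝒮 : A ∈ A.powerset.filter (fun C => P C) :=
    Finset.mem_filter.2 ⟨Finset.mem_powerset.2 (subset_refl A), hPA⟩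
  obtain ⟨Ahat, hAhat𝒮, hmin⟩ :=
    Finset.exists_min_image (A.powerset.filter (fun C => P C)) Finset.card ⟨A, h𝒮⟩
  have hsub : Ahat ⊆ A := Finset.mem_powerset.1 (Finset.mem_filter.1 hAhat𝒮).1
  have hPAhat : P Ahat := (Finset.mem_filter.1 hAhat𝒮).2
  refine ⟨Ahat, ⟨hsub, fun B hB => ⟨fun h => hPAhat B hB h,
    fun ⟨S, hS, hd⟩ => ⟨S, hsub hS, hd⟩⟩⟩, ?_⟩
  have hwit : ∀ A0 ∈ Ahat, ∃ B : Finset (Fin n), B.card ≤ q ∧ Disjoint A0 B ∧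
      ∀ S ∈ Ahat, S ≠ A0 → ¬ Disjoint S B := by
    intro A0 hA0
    have hner : ¬ P (Ahat.erase A0) := by
      intro hPe
      have hmem : Ahat.erase A0 ∈ A.powerset.filter (fun C => P C) :=
        Finset.mem_filter.2
          ⟨Finset.mem_powerset.2 ((Finset.erase_subset _ _).trans hsub), hPe⟩
      have h1 := hmin _ hmem
      have h2 := Finset.card_erase_of_mem hA0
      have hpos : 0 < Ahat.card := Finset.card_pos.2 ⟨A0, hA0⟩
      omega
    have hner2 : ∃ B : Finset (Fin n), B.card ≤ q ∧ (∃ S ∈ A, Disjoint S B) ∧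
        ∀ S ∈ Ahat.erase A0, ¬ Disjoint S B := by
      by_contra hc
      push_neg at hc
      exact hner (fun B hB hex => hc B hB hex)
    obtain ⟨B, hBcard, hBex, hBnone⟩ := hner2
    obtain ⟨S, hSmem, hSdisj⟩ := hPAhat B hBcard hBex
    have hSA0 : S = A0 := by
      by_contra hne
      exact hBnone S (Finset.mem_erase.2 ⟨hne, hSmem⟩) hSdisj
    exact ⟨B, hBcard, hSA0 ▸ hSdisj,
      fun S' hS' hne' hd' => hBnone S' (Finset.mem_erase.2 ⟨hne', hS'⟩) hd'⟩
  choose! Bf hBf1 hBf2 hBf3 using hwit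
  exact bollobas Ahat Bf (fun S hS => hA S (hsub hS)) hBf1 hBf2
    (fun S hS S' hS' hne => hBf3 S hS S' hS' hne.symm)
end

section
/- Let G be a graph, v a vertex, and for each neighbour u of v let P̂_{u,ℓ−1} be a (k−ℓ+1)-representative family for P_{u,ℓ−1} (the family of vertex sets of (ℓ−1)-vertex paths ending at u). Then the family P'_{v,ℓ} = ⋃_{u ∈ N(v)} { {v} ∪ U : U ∈ P̂_{u,ℓ−1}, v ∉ U } is (k−ℓ)-representative for P_{v,ℓ}, the family of vertex sets of ℓ-vertex paths ending at v. -/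
/-- The family of vertex sets of paths on `ℓ` vertices ending at `v` in `G`. -/
def PathFam {V : Type*} (G : SimpleGraph V) (v : V) (ℓ : ℕ) : Set (Set V) :=
  {U | ∃ (u : V) (w : G.Walk u v), w.IsPath ∧ w.support.length = ℓ ∧
    U = {x | x ∈ w.support}}

/-- `F'` is a `q`-representative subfamily of `F`: for every vertex set `B` with
`|B| ≤ q`, `F` contains a member disjoint from `B` iff `F'` does. -/
def IsRep {V : Type*} (q : ℕ) (F' F : Set (Set V)) : Prop :=
  F' ⊆ F ∧ ∀ B : Finset V, B.card ≤ q →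
    ((∃ A ∈ F, Disjoint A (↑B : Set V)) ↔ (∃ A ∈ F', Disjoint A (↑B : Set V)))

theorem pathFam_representative_step {V : Type*} [Fintype V] (G : SimpleGraph V)
    (v : V) (k ℓ : ℕ) (h2 : 2 ≤ ℓ) (hk : ℓ ≤ k) (Phat : V → Set (Set V))
    (hrep : ∀ u ∈ G.neighborSet v, IsRep (k - ℓ + 1) (Phat u) (PathFam G u (ℓ - 1))) :
    IsRep (k - ℓ)
      {S | ∃ u ∈ G.neighborSet v, ∃ U ∈ Phat u, v ∉ U ∧ S = insert v U}
      (PathFam G v ℓ) := by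
  classical
  have hsubF' : {S | ∃ u ∈ G.neighborSet v, ∃ U ∈ Phat u, v ∉ U ∧ S = insert v U}
      ⊆ PathFam G v ℓ := by
    rintro S ⟨u, hu, U, hU, hvU, rfl⟩
    have hadj : G.Adj v u := hu
    obtain ⟨hsub, -⟩ := hrep u hu
    obtain ⟨u₀, Q, hQp, hQl, rfl⟩ := hsub hU
    have hvQ : v ∉ Q.support := hvU
    have hpath : (Q.concat hadj.symm).IsPath := by
      rw [← SimpleGraph.Walk.isPath_reverse_iff, SimpleGraph.Walk.reverse_concat,
        SimpleGraph.Walk.cons_isPath_iff]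
      exact ⟨hQp.reverse, by simpa [SimpleGraph.Walk.support_reverse] using hvQ⟩
    refine ⟨u₀, Q.concat hadj.symm, hpath, ?_, ?_⟩
    · rw [SimpleGraph.Walk.support_concat, List.length_append, List.length_singleton]
      omega
    · ext x
      simp only [SimpleGraph.Walk.support_concat, List.concat_eq_append,
        List.mem_append, List.mem_singleton, Set.mem_setOf_eq, Set.mem_insert_iff]
      tauto
  refine ⟨hsubF', fun B hB => ⟨?_, fun ⟨A, hA, hd⟩ => ⟨A, hsubF' hA, hd⟩⟩⟩
  rintro ⟨A, ⟨u₀, w, hwp, hwl, rfl⟩, hdisj⟩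
  -- work with the reverse of w
  have hrl : w.reverse.support.length = ℓ := by
    rw [SimpleGraph.Walk.support_reverse, List.length_reverse, hwl]
  have hrp : w.reverse.IsPath := hwp.reverse
  have hset : {x | x ∈ w.support} = {x | x ∈ w.reverse.support} := by
    ext x; simp [SimpleGraph.Walk.support_reverse]
  rw [hset] at hdisj
  cases hr : w.reverse with
  | nil => rw [hr] at hrl; simp at hrl; omega
  | cons hadj q =>
    rename_i u
    rw [hr] at hrl hrp hdisj
    rw [SimpleGraph.Walk.cons_isPath_iff] at hrp
    obtain ⟨hqp, hvq⟩ := hrp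
    have hql : q.support.length = ℓ - 1 := by
      rw [SimpleGraph.Walk.support_cons, List.length_cons] at hrl
      omega
    have hu : u ∈ G.neighborSet v := hadj
    -- the path q.reverse ends at u
    have hA' : {x | x ∈ q.support} ∈ PathFam G u (ℓ - 1) := by
      refine ⟨u₀, q.reverse, hqp.reverse, ?_, ?_⟩
      · rw [SimpleGraph.Walk.support_reverse, List.length_reverse, hql]
      · ext x; simp [SimpleGraph.Walk.support_reverse]
    have hvB : v ∉ (↑B : Set V) := by
      intro hvB
      exact hdisj.ne_of_mem (by simp [SimpleGraph.Walk.support_cons]) hvB rfl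
    have hB' : (insert v B).card ≤ k - ℓ + 1 := by
      calc (insert v B).card ≤ B.card + 1 := Finset.card_insert_le v B
        _ ≤ k - ℓ + 1 := by omega
    have hdisj' : Disjoint {x | x ∈ q.support} (↑(insert v B) : Set V) := by
      rw [Set.disjoint_left]
      intro x hx hxB
      simp only [Finset.coe_insert, Set.mem_insert_iff] at hxB
      rcases hxB with rfl | hxB
      · exact hvq hx
      · refine hdisj.ne_of_mem ?_ hxB rfl
        simp only [SimpleGraph.Walk.support_cons, Set.mem_setOf_eq, List.mem_cons]
        exact Or.inr hx
    obtain ⟨U, hU, hUd⟩ := ((hrep u hu).2 (insert v B) hB').mp ⟨_, hA', hdisj'⟩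
    have hvU : v ∉ U := fun h => hUd.ne_of_mem h (by simp) rfl
    refine ⟨insert v U, ⟨u, hu, U, hU, hvU, rfl⟩, ?_⟩
    rw [Set.disjoint_left]
    rintro x (rfl | hx) hxB
    · exact hvB hxB
    · exact hUd.ne_of_mem hx (by simp [hxB]) rfl
end
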